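/- arXiv:1804.03762 — 4 statements merged into one kernel-verified Lean document; each statement's English description precedes it below -/
import Mathlib

section
/- For a commutative ring R, PicS(R) equals the set of isomorphism classes [E] of finitely generated projective central R-R-bimodules E such that for every prime ideal 𝔭 of R, the localization E_𝔭 is either 0 or isomorphic to R_𝔭 as an R_𝔭-module. -/
lemma local_char (A N : Type) [CommRing A] [IsLocalRing A] [AddCommGroup N] [Module A N]
    [Module.Finite A N] [Module.Projective A N] :
    Function.Surjective (algebraMap A (Module.End A N)) ↔
      Subsingleton N ∨ Nonempty (N ≃ₗ[A] A) := by
  have : Module.FinitePresentation A N := Module.finitePresentation_of_projective A N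
  have hfree : Module.Free A N := Module.free_of_flat_of_isLocalRing
  constructor
  · intro h
    rcases subsingleton_or_nontrivial N with hs | hn
    · exact Or.inl hs
    · right
      set ι := Module.Free.ChooseBasisIndex A N
      have b : Module.Basis ι A N := Module.Free.chooseBasis A N
      have hne : Nonempty ι := b.index_nonempty
      have hsub : Subsingleton ι := by
        by_contra hns
        rw [not_subsingleton_iff_nontrivial] at hns
        obtain ⟨i, j, hij⟩ := hns
        -- projection onto coordinate i
        set f : Module.End A N := LinearMap.smulRight (b.coord i) (b i) with hf
        obtain ⟨r, hr⟩ := h f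
        have h1 : r • b i = b i := by
          have := congrFun (congrArg DFunLike.coe hr) (b i)
          simpa [Module.algebraMap_end_apply, hf] using this
        have h0 : r • b j = 0 := by
          have := congrFun (congrArg DFunLike.coe hr) (b j)
          simpa [Module.algebraMap_end_apply, hf, Module.Basis.coord_apply,
            b.repr_self_apply, hij.symm] using this
        have hr1 : r = 1 := by
          have := congrArg (fun x => b.repr x i) h1
          simpa [b.repr_self_apply] using this
        have hr0 : r = 0 := by
          have := congrArg (fun x => b.repr x j) h0
          simpa [b.repr_self_apply] using this
        exact one_ne_zero (hr1 ▸ hr0)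
      have : Unique ι := ⟨⟨hne.some⟩, fun a => Subsingleton.elim _ _⟩
      exact ⟨b.repr.trans (Finsupp.LinearEquiv.finsuppUnique A A ι)⟩
  · intro hyp
    obtain hs | he := hyp
    · exact fun f => ⟨0, LinearMap.ext fun m => Subsingleton.elim _ _⟩
    · obtain ⟨e⟩ := he
      intro f
      refine ⟨e (f (e.symm 1)), LinearMap.ext fun m => ?_⟩
      apply e.injective
      have hm : m = (e m) • e.symm 1 := by
        rw [← e.symm_apply_apply m, ← map_smul]; simp
      rw [Module.algebraMap_end_apply, map_smul]
      conv_rhs => rw [hm]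
      rw [map_smul, map_smul]
      simp [smul_eq_mul, mul_comm]

lemma surj_localize (R : Type) [CommRing R] (M : Type) [AddCommGroup M] [Module R M]
    [Module.Finite R M] [Module.Projective R M] (S : Submonoid R)
    (h : Function.Surjective (algebraMap R (Module.End R M))) :
    Function.Surjective (algebraMap (Localization S)
      (Module.End (Localization S) (LocalizedModule S M))) := by
  have hFP : Module.FinitePresentation R M := Module.finitePresentation_of_projective R M
  set φ : (M →ₗ[R] M) →ₗ[R]
      (LocalizedModule S M →ₗ[Localization S] LocalizedModule S M) :=
    LocalizedModule.map S (M := M) (N := M) with hφ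
  intro f
  obtain ⟨⟨g, s⟩, hgs⟩ := IsLocalizedModule.mk'_surjective S φ f
  obtain ⟨r, hr⟩ := h g
  refine ⟨IsLocalization.mk' (Localization S) r s, ?_⟩
  have hu := (Module.End.isUnit_iff _).mp (IsLocalizedModule.map_units φ s)
  apply hu.1
  rw [Module.algebraMap_end_apply, Module.algebraMap_end_apply]
  simp only [Function.uncurry] at hgs
  rw [← hgs]
  conv_rhs => rw [← Submonoid.smul_def, IsLocalizedModule.mk'_cancel']
  -- goal now : s • algebraMap Rₛ (mk' r s) = φ g
  rw [← hr]
  ext m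
  simp only [LinearMap.smul_apply]
  rw [Module.algebraMap_end_apply]
  have : φ (algebraMap R (Module.End R M) r) = algebraMap (Localization S)
      (Module.End (Localization S) (LocalizedModule S M)) (algebraMap R (Localization S) r) := by
    have : algebraMap R (Module.End R M) r = r • LinearMap.id := by
      ext x; simp [Module.algebraMap_end_apply]
    rw [this, map_smul, hφ, LocalizedModule.map_id]
    ext x
    rw [Module.algebraMap_end_apply, LinearMap.smul_apply, LinearMap.id_apply,
      algebraMap_smul]
  rw [this, Module.algebraMap_end_apply]
  rw [← algebraMap_smul (Localization S) (s : R), smul_smul, IsLocalization.mk'_spec',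
    algebraMap_smul]

lemma map_algebraMap' (R : Type) [CommRing R] (M : Type) [AddCommGroup M] [Module R M]
    (S : Submonoid R) (r : R) :
    LocalizedModule.map S (M := M) (N := M) (algebraMap R (Module.End R M) r) =
      algebraMap (Localization S) (Module.End (Localization S) (LocalizedModule S M))
        (algebraMap R (Localization S) r) := by
  have h1 : algebraMap R (Module.End R M) r = r • LinearMap.id := by
    ext x; simp [Module.algebraMap_end_apply]
  rw [h1, map_smul, LocalizedModule.map_id]
  ext x
  rw [Module.algebraMap_end_apply, LinearMap.smul_apply, LinearMap.id_apply, algebraMap_smul]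

lemma smul_mk'_algebraMap' (R : Type) [CommRing R] (M : Type) [AddCommGroup M] [Module R M]
    (S : Submonoid R) (r : R) (s : S) :
    (s : R) • (algebraMap (Localization S) (Module.End (Localization S) (LocalizedModule S M))
        (IsLocalization.mk' (Localization S) r s)) =
      algebraMap (Localization S) (Module.End (Localization S) (LocalizedModule S M))
        (algebraMap R (Localization S) r) := by
  ext m
  simp only [LinearMap.smul_apply, Module.algebraMap_end_apply]
  rw [← algebraMap_smul (Localization S) (s : R), smul_smul, IsLocalization.mk'_spec']

lemma surj_of_localized (R : Type) [CommRing R] (M : Type) [AddCommGroup M] [Module R M]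
    [Module.Finite R M] [Module.Projective R M]
    (h : ∀ (P : Ideal R) [P.IsMaximal],
      Function.Surjective (algebraMap (Localization P.primeCompl)
        (Module.End (Localization P.primeCompl) (LocalizedModule P.primeCompl M)))) :
    Function.Surjective (algebraMap R (Module.End R M)) := by
  have hFP : Module.FinitePresentation R M := Module.finitePresentation_of_projective R M
  have key := surjective_of_isLocalized_maximal
    (fun P _ => Localization P.primeCompl)
    (fun P _ => Algebra.linearMap R (Localization P.primeCompl))
    (fun P _ => LocalizedModule P.primeCompl M →ₗ[Localization P.primeCompl]
        LocalizedModule P.primeCompl M)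
    (fun P _ => LocalizedModule.map P.primeCompl)
    (Algebra.linearMap R (Module.End R M)) ?_
  · exact key
  · intro P hP
    intro y
    obtain ⟨c, hc⟩ := h P y
    obtain ⟨⟨r, s⟩, hrs⟩ := IsLocalization.mk'_surjective P.primeCompl c
    refine ⟨IsLocalizedModule.mk' (Algebra.linearMap R (Localization P.primeCompl)) r s, ?_⟩
    rw [IsLocalizedModule.map_mk']
    have hu := (Module.End.isUnit_iff _).mp
      (IsLocalizedModule.map_units (LocalizedModule.map P.primeCompl (M := M) (N := M)) s)
    apply hu.1
    rw [Module.algebraMap_end_apply, Module.algebraMap_end_apply, ← Submonoid.smul_def,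
      IsLocalizedModule.mk'_cancel', ← hc, ← hrs]
    show LocalizedModule.map P.primeCompl (M := M) (N := M)
        (algebraMap R (Module.End R M) r) = _
    rw [map_algebraMap', smul_mk'_algebraMap']


/-- Characterization of `PicS(R)`: a finitely generated projective (central)
`R`-module `M` admits an `R`-algebra epimorphism `R → End_R(M)` (i.e. the class
`[M]` lies in `PicS(R)`) if and only if `M` has rank at most one at every prime,
i.e. for every prime `𝔭` of `R` the localization `M_𝔭` is `0` or isomorphic to
`R_𝔭` as an `R_𝔭`-module. -/
theorem picS_char (R : Type) [CommRing R]
    (M : Type) [AddCommGroup M] [Module R M]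
    (hfin : Module.Finite R M) (hproj : Module.Projective R M) :
    Function.Surjective (algebraMap R (Module.End R M)) ↔
      ∀ (p : Ideal R) [p.IsPrime],
        Subsingleton (LocalizedModule p.primeCompl M) ∨
          Nonempty (LocalizedModule p.primeCompl M ≃ₗ[Localization p.primeCompl]
            Localization p.primeCompl) := by
  have inst1 : ∀ (S : Submonoid R),
      Module.Finite (Localization S) (LocalizedModule S M) :=
    fun S => Module.Finite.of_isLocalizedModule S (LocalizedModule.mkLinearMap S M)
  have inst2 : ∀ (S : Submonoid R),
      Module.Projective (Localization S) (LocalizedModule S M) :=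
    fun S => Module.projective_of_isLocalizedModule S (LocalizedModule.mkLinearMap S M)
  constructor
  · intro h p hp
    have hloc : IsLocalRing (Localization p.primeCompl) :=
      IsLocalization.AtPrime.isLocalRing (Localization p.primeCompl) p
    have := inst1 p.primeCompl
    have := inst2 p.primeCompl
    exact (local_char (Localization p.primeCompl) (LocalizedModule p.primeCompl M)).mp
      (surj_localize R M p.primeCompl h)
  · intro h
    apply surj_of_localized
    intro P hP
    have hpr : P.IsPrime := hP.isPrime
    have hloc : IsLocalRing (Localization P.primeCompl) :=
      IsLocalization.AtPrime.isLocalRing (Localization P.primeCompl) P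
    have := inst1 P.primeCompl
    have := inst2 P.primeCompl
    exact (local_char (Localization P.primeCompl) (LocalizedModule P.primeCompl M)).mpr (h P)
end

section
/- Let R be a commutative ring and M a finitely generated projective R-module with annihilator I_M = Ann_R(M). The following are equivalent: (i) M ⊗_R M ≅ M as R-modules; (ii) M ≅ R/I_M as R-modules; (iii) M ≅ Re for some idempotent e ∈ R (and then I_M = R(1−e)). -/
open TensorProduct

section LemmaA
variable {R : Type} [CommRing R] {M : Type} [AddCommGroup M] [Module R M]

theorem my_exists_dual_system [Module.Finite R M] [Module.Projective R M] :
    ∃ (n : ℕ) (s : Fin n → M) (f : Fin n → (M →ₗ[R] R)),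
      ∀ m : M, ∑ i, f i m • s i = m := by
  obtain ⟨n, π, hπ⟩ := Module.Finite.exists_fin' R M
  obtain ⟨σ, hσ⟩ := Module.projective_lifting_property π LinearMap.id hπ
  refine ⟨n, fun i => π (Pi.single i 1), fun i => (LinearMap.proj i) ∘ₗ σ, fun m => ?_⟩
  have h1 : ∀ i, (σ m i) • π (Pi.single i 1) = π (Pi.single i (σ m i)) := by
    intro i
    rw [← map_smul]
    congr 1
    ext j
    by_cases h : i = j <;> simp [Pi.single_apply, h]
  simp only [LinearMap.comp_apply, LinearMap.proj_apply, h1]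
  rw [← map_sum, Finset.univ_sum_single (σ m)]
  exact congrFun (congrArg (⇑) hσ) m

theorem my_exists_idem [Module.Finite R M] [Module.Projective R M] :
    ∃ e : R, IsIdempotentElem e ∧
      (⊤ : Submodule R M).annihilator = Ideal.span {1 - e} := by
  obtain ⟨n, s, f, hf⟩ := my_exists_dual_system (R := R) (M := M)
  set T : Ideal R := Ideal.span (Set.range fun p : Fin n × Fin n => f p.1 (s p.2)) with hT
  have hgen : ∀ i j, f i (s j) ∈ T := fun i j =>
    Ideal.subset_span ⟨(i, j), rfl⟩
  have hmem : ∀ (i : Fin n) (m : M), f i m ∈ T := by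
    intro i m
    have : f i m = ∑ j, f j m * f i (s j) := by
      conv_lhs => rw [← hf m]
      rw [map_sum]
      simp [smul_eq_mul, mul_comm]
    rw [this]
    exact Ideal.sum_mem _ fun j _ => Ideal.mul_mem_left _ _ (hgen i j)
  have hTfg : T.FG := Submodule.fg_span (Set.finite_range _)
  have hT2 : IsIdempotentElem T := by
    refine le_antisymm (Ideal.mul_le_right) ?_
    rw [hT, Ideal.span_le]
    rintro x ⟨⟨i, j⟩, rfl⟩
    show f i (s j) ∈ _
    have : f i (s j) = ∑ k, f k (s j) * f i (s k) := by
      conv_lhs => rw [← hf (s j)]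
      rw [map_sum]
      simp [smul_eq_mul, mul_comm]
    rw [this]
    exact Ideal.sum_mem _ fun k _ => Ideal.mul_mem_mul (hgen k j) (hgen i k)
  obtain ⟨e, he, hTe⟩ := (Ideal.isIdempotentElem_iff_of_fg T hTfg).mp hT2
  rw [Ideal.submodule_span_eq] at hTe
  have hfe : ∀ (i : Fin n) (m : M), f i m * e = f i m := by
    intro i m
    obtain ⟨c, hc⟩ := Ideal.mem_span_singleton'.mp (by rw [← hTe]; exact hmem i m)
    rw [← hc, mul_assoc, he.eq]
  refine ⟨e, he, le_antisymm ?_ ?_⟩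
  · intro r hr
    have hrm : ∀ m : M, r • m = 0 := fun m =>
      Submodule.mem_annihilator.mp hr m Submodule.mem_top
    have hre : r * e = 0 := by
      have heT : e ∈ T := by rw [hTe]; exact Submodule.mem_span_singleton_self e
      have : ∀ x ∈ T, r * x = 0 := by
        intro x hx
        induction hx using Submodule.span_induction with
        | mem x hx =>
          obtain ⟨⟨i, j⟩, rfl⟩ := hx
          show r * f i (s j) = 0
          rw [← smul_eq_mul, ← map_smul, hrm, map_zero]
        | zero => rw [mul_zero]
        | add x y _ _ hx hy => rw [mul_add, hx, hy, add_zero]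
        | smul a x _ hx => rw [smul_eq_mul, mul_left_comm, hx, mul_zero]
      exact this e heT
    rw [Ideal.mem_span_singleton']
    exact ⟨r, by rw [mul_sub, mul_one, hre, sub_zero]⟩
  · rw [Ideal.span_singleton_le_iff_mem]
    rw [Submodule.mem_annihilator]
    intro m _
    have : e • m = m := by
      conv_lhs => rw [← hf m]
      rw [Finset.smul_sum]
      conv_rhs => rw [← hf m]
      refine Finset.sum_congr rfl fun i _ => ?_
      rw [smul_smul, mul_comm, hfe]
    rw [sub_smul, one_smul, this, sub_self]

end LemmaA

section LemmaB
variable {R : Type} [CommRing R]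

noncomputable def myQuotSpanEquiv (e : R) (he : IsIdempotentElem e) :
    (R ⧸ Ideal.span {1 - e}) ≃ₗ[R] ↥(Ideal.span {e}) := by
  let φ₀ := LinearMap.toSpanSingleton R R e
  have hker : LinearMap.ker φ₀ = (Ideal.span {1 - e} : Ideal R) := by
    ext r
    simp only [LinearMap.mem_ker, φ₀, LinearMap.toSpanSingleton_apply, smul_eq_mul]
    constructor
    · intro h
      exact Ideal.mem_span_singleton'.mpr ⟨r, by rw [mul_sub, mul_one, h, sub_zero]⟩
    · intro h
      obtain ⟨a, rfl⟩ := Ideal.mem_span_singleton'.mp h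
      rw [mul_assoc, sub_mul, one_mul, he.eq, sub_self, mul_zero]
  have hrange : LinearMap.range φ₀ = (Ideal.span {e} : Ideal R) := by
    rw [← LinearMap.span_singleton_eq_range, Ideal.submodule_span_eq]
  exact (Submodule.quotEquivOfEq _ _ hker.symm).trans
    (φ₀.quotKerEquivRange.trans (LinearEquiv.ofEq _ _ hrange))

end LemmaB

section Backward
variable {R : Type} [CommRing R] {M : Type} [AddCommGroup M] [Module R M]

theorem my_backward (g : M ≃ₗ[R] (R ⧸ ((⊤ : Submodule R M).annihilator))) :
    Nonempty ((M ⊗[R] M) ≃ₗ[R] M) := by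
  set I := (⊤ : Submodule R M).annihilator with hI
  have e1 : (M ⊗[R] M) ≃ₗ[R] (M ⊗[R] (R ⧸ I)) :=
    TensorProduct.congr (LinearEquiv.refl R M) g
  have e2 : (M ⊗[R] (R ⧸ I)) ≃ₗ[R] (M ⧸ (I • (⊤ : Submodule R M))) :=
    tensorQuotEquivQuotSMul M I
  have hbot : I • (⊤ : Submodule R M) = ⊥ := by
    rw [eq_bot_iff]
    refine Submodule.smul_le.mpr fun r hr m _ => ?_
    rw [Submodule.mem_bot]
    exact Submodule.mem_annihilator.mp hr m Submodule.mem_top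
  exact ⟨e1.trans (e2.trans (Submodule.quotEquivOfEqBot _ hbot))⟩

end Backward

section Helpers
variable {R : Type} [CommRing R]

theorem my_subsingleton_baseChange {M : Type} [AddCommGroup M] [Module R M]
    (S : Submonoid R) (t : R) (ht : t ∈ S) (h0 : ∀ m : M, t • m = 0) :
    Subsingleton ((Localization S) ⊗[R] M) := by
  have hz : ∀ x : (Localization S) ⊗[R] M, t • x = 0 := by
    intro x
    induction x using TensorProduct.induction_on with
    | zero => rw [smul_zero]
    | tmul a m => rw [smul_tmul', smul_tmul, h0, tmul_zero]
    | add x y hx hy => rw [smul_add, hx, hy, add_zero]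
  have hu := IsLocalization.map_units (Localization S) ⟨t, ht⟩
  obtain ⟨v, hv⟩ := hu
  refine ⟨fun a b => ?_⟩
  have key : ∀ x : (Localization S) ⊗[R] M, x = 0 := by
    intro x
    have h1 : (v : Localization S) • x = 0 := by
      rw [hv, algebraMap_smul, hz]
    calc x = (↑v⁻¹ * ↑v : Localization S) • x := by rw [v.inv_mul, one_smul]
    _ = (↑v⁻¹ : Localization S) • ((v : Localization S) • x) := by rw [mul_smul]
    _ = 0 := by rw [h1, smul_zero]
  rw [key a, key b]

theorem my_bijective_localized_of_baseChange {M N : Type} [AddCommGroup M] [Module R M]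
    [AddCommGroup N] [Module R N] (S : Submonoid R) (F : M →ₗ[R] N)
    (h : Function.Bijective (F.baseChange (Localization S))) :
    Function.Bijective
      (IsLocalizedModule.map S (LocalizedModule.mkLinearMap S M)
        (LocalizedModule.mkLinearMap S N) F) := by
  set A := Localization S
  let f₀ : M →ₗ[R] A ⊗[R] M := TensorProduct.mk R A M 1
  let f₁ : N →ₗ[R] A ⊗[R] N := TensorProduct.mk R A N 1
  haveI i₀ : IsLocalizedModule S f₀ :=
    (isLocalizedModule_iff_isBaseChange S A f₀).mpr (TensorProduct.isBaseChange R M A)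
  haveI i₁ : IsLocalizedModule S f₁ :=
    (isLocalizedModule_iff_isBaseChange S A f₁).mpr (TensorProduct.isBaseChange R N A)
  have key : IsLocalizedModule.map S f₀ f₁ F = (F.baseChange A).restrictScalars R := by
    apply IsLocalizedModule.ext S f₀ (IsLocalizedModule.map_units f₁)
    rw [IsLocalizedModule.map_comp]
    ext m
    simp [f₀, f₁]
  have comm := IsLocalizedModule.map_iso_commute S f₀ f₁ F
  -- comm : (map S f₀ f₁) F ∘ₗ (iso S f₀) = (iso S f₁) ∘ₗ (map S mk mk) F
  have hbij : Function.Bijective ((IsLocalizedModule.map S f₀ f₁ F) ∘ₗ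
      (IsLocalizedModule.iso S f₀).toLinearMap) := by
    rw [key]
    exact h.comp (IsLocalizedModule.iso S f₀).bijective
  rw [comm] at hbij
  have := (Function.Bijective.of_comp_iff' (IsLocalizedModule.iso S f₁).bijective
    (⇑(IsLocalizedModule.map S (LocalizedModule.mkLinearMap S M)
        (LocalizedModule.mkLinearMap S N) F))).mp hbij
  exact this

end Helpers

section Forward
variable {R : Type} [CommRing R] {M : Type} [AddCommGroup M] [Module R M]

set_option maxHeartbeats 2000000 in
theorem my_local_case [Module.Finite R M] [Module.Projective R M]
    (φ : (M ⊗[R] M) ≃ₗ[R] M) (e : R) (he : IsIdempotentElem e)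
    (hann : (⊤ : Submodule R M).annihilator = Ideal.span {1 - e})
    (n : ℕ) (s : Fin n → M) (f : Fin n → (M →ₗ[R] R))
    (hf : ∀ m : M, ∑ i, f i m • s i = m)
    (J : Ideal R) (hJp : J.IsPrime) (heJ : e ∉ J)
    (A : Type) [CommRing A] [Algebra R A] [IsLocalization J.primeCompl A] [IsLocalRing A] :
    Function.Bijective
      ((((⊤ : Submodule R M).annihilator.mkQ ∘ₗ
        (∑ i, (f i) ∘ₗ φ.toLinearMap ∘ₗ ((TensorProduct.mk R M M).flip (s i)))).baseChange A)) := by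
  classical
  set I := (⊤ : Submodule R M).annihilator with hI
  set θ : M →ₗ[R] R :=
    ∑ i, (f i) ∘ₗ φ.toLinearMap ∘ₗ ((TensorProduct.mk R M M).flip (s i)) with hθdef
  have hθapp : ∀ m : M, θ m = ∑ i, f i (φ (m ⊗ₜ[R] s i)) := by
    intro m
    rw [hθdef]
    simp [LinearMap.sum_apply]
  show Function.Bijective ((Submodule.mkQ I ∘ₗ θ).baseChange A)
  have hρdef : Submodule.mkQ I ∘ₗ θ = Submodule.mkQ I ∘ₗ θ := rfl
  have heS : e ∈ J.primeCompl := heJ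
  have hu : IsUnit (algebraMap R A e) := IsLocalization.map_units A ⟨e, heS⟩
  have halg : algebraMap R A (1 - e) = 0 := by
    have h1 : algebraMap R A e * algebraMap R A (1 - e) = 0 := by
      rw [← map_mul, mul_sub, mul_one, he.eq, sub_self, map_zero]
    exact (hu.mul_right_eq_zero).mp h1
  have halgI : ∀ r ∈ I, algebraMap R A r = 0 := by
    intro r hr
    rw [hann] at hr
    obtain ⟨c, rfl⟩ := Ideal.mem_span_singleton'.mp hr
    rw [map_mul, halg, mul_zero]
  haveI : Module.FinitePresentation R M := Module.finitePresentation_of_projective R M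
  haveI : Module.Free A (A ⊗[R] M) := Module.free_of_flat_of_isLocalRing
  -- nontriviality
  have hnontriv : Nontrivial (A ⊗[R] M) := by
    obtain ⟨k, g, hg⟩ := Module.Finite.exists_fin (R := R) (M := M)
    by_contra hcon
    rw [not_nontrivial_iff_subsingleton] at hcon
    let f₀ : M →ₗ[R] A ⊗[R] M := TensorProduct.mk R A M 1
    haveI i₀ : IsLocalizedModule J.primeCompl f₀ :=
      (isLocalizedModule_iff_isBaseChange J.primeCompl A f₀).mpr
        (TensorProduct.isBaseChange R M A)
    have hz : ∀ i, ∃ c : J.primeCompl, c • g i = c • (0 : M) :=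
      fun i => IsLocalizedModule.exists_of_eq (S := J.primeCompl) (f := f₀)
        (Subsingleton.elim _ _)
    choose t ht using hz
    set T : J.primeCompl := ∏ i, t i with hTdef
    have hT : ∀ i, (T : R) • g i = 0 := by
      intro i
      have hTsplit : (T : R) = (∏ j ∈ Finset.univ.erase i, (t j : R)) * (t i : R) := by
        rw [hTdef]
        push_cast
        rw [Finset.prod_erase_mul _ _ (Finset.mem_univ i)]
      rw [hTsplit, mul_smul]
      have : (t i : R) • g i = 0 := by
        have := ht i
        rwa [smul_zero] at this
      rw [this, smul_zero]
    have hTI : (T : R) ∈ I := by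
      rw [hI]
      rw [Submodule.mem_annihilator]
      intro m hmtop
      clear hmtop
      have hm : m ∈ Submodule.span R (Set.range g) := by rw [hg]; exact Submodule.mem_top
      induction hm using Submodule.span_induction with
      | mem y hy => obtain ⟨i, rfl⟩ := hy; exact hT i
      | zero => rw [smul_zero]
      | add u v _ _ hu hv => rw [smul_add, hu, hv, add_zero]
      | smul a u _ hu => rw [smul_comm, hu, smul_zero]
    rw [hann] at hTI
    obtain ⟨c, hc⟩ := Ideal.mem_span_singleton'.mp hTI
    have hTe : (T : R) * e = 0 := by
      rw [← hc, mul_assoc, sub_mul, one_mul, he.eq, sub_self, mul_zero]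
    have h0J : (T : R) * e ∈ J := by rw [hTe]; exact J.zero_mem
    rcases hJp.mem_or_mem h0J with h | h
    · exact T.2 h
    · exact heJ h
  -- the isomorphism (A ⊗ M) ⊗[A] (A ⊗ M) ≃ A ⊗ M
  set ζ := TensorProduct.AlgebraTensorModule.distribBaseChange R A M M with hζdef
  have hφcomp : φ.toLinearMap ∘ₗ φ.symm.toLinearMap = LinearMap.id := by
    ext z; simp
  have hφcomp' : φ.symm.toLinearMap ∘ₗ φ.toLinearMap = LinearMap.id := by
    ext z; simp
  set Eφ : A ⊗[R] (M ⊗[R] M) ≃ₗ[A] A ⊗[R] M :=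
    LinearEquiv.ofLinear (φ.toLinearMap.baseChange A) (φ.symm.toLinearMap.baseChange A)
      (by rw [← LinearMap.baseChange_comp, hφcomp, LinearMap.baseChange_id])
      (by rw [← LinearMap.baseChange_comp, hφcomp', LinearMap.baseChange_id]) with hEφdef
  set E : ((A ⊗[R] M) ⊗[A] (A ⊗[R] M)) ≃ₗ[A] A ⊗[R] M := ζ.symm.trans Eφ with hEdef
  -- rank computation
  have hfr : Module.finrank A ((A ⊗[R] M) ⊗[A] (A ⊗[R] M)) = Module.finrank A (A ⊗[R] M) :=
    E.finrank_eq
  rw [Module.finrank_tensorProduct] at hfr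
  have hd1 : Module.finrank A (A ⊗[R] M) = 1 := by
    have hd0 : Module.finrank A (A ⊗[R] M) ≠ 0 := by
      intro h0
      rw [Module.finrank_eq_card_chooseBasisIndex] at h0
      haveI := Fintype.card_eq_zero_iff.mp h0
      let b0 := Module.Free.chooseBasis A (A ⊗[R] M)
      have hz : ∀ x : A ⊗[R] M, x = 0 := by
        intro x
        have h1 : b0.repr x = 0 := by
          ext i
          exact (IsEmpty.false i).elim
        have := congrArg b0.repr.symm h1
        rwa [LinearEquiv.symm_apply_apply, map_zero] at this
      rcases hnontriv with ⟨a, b, hab⟩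
      exact hab (by rw [hz a, hz b])
    rcases Nat.lt_or_ge (Module.finrank A (A ⊗[R] M)) 2 with hlt | hge
    · omega
    · nlinarith [hfr]
  -- choosing a basis
  rw [Module.finrank_eq_card_chooseBasisIndex] at hd1
  set b : Module.Basis (Fin 1) A (A ⊗[R] M) :=
    (Module.Free.chooseBasis A (A ⊗[R] M)).reindex (Fintype.equivFinOfCardEq hd1) with hbdef
  set x : A ⊗[R] M := b 0 with hxdef
  have hrepr : ∀ y : A ⊗[R] M, y = b.repr y 0 • x := by
    intro y
    have h1 := b.sum_repr y
    rw [Fin.sum_univ_one] at h1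
    exact h1.symm
  have hreprx : b.repr x 0 = 1 := by
    rw [hxdef, b.repr_self, Finsupp.single_eq_same]
  have hcoeff : ∀ c d : A, c • x = d • x → c = d := by
    intro c d hcd
    have := congrArg (fun y => b.repr y 0) hcd
    simpa [hreprx] using this
  -- dual functionals
  set ν := TensorProduct.AlgebraTensorModule.rid R A A with hνdef
  set Fc : Fin n → (A ⊗[R] M →ₗ[A] A) :=
    fun i => (ν.toLinearMap ∘ₗ (f i).baseChange A) with hFcdef
  have hFctmul : ∀ (i) (a : A) (m : M), Fc i (a ⊗ₜ[R] m) = f i m • a := by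
    intro i a m
    simp [hFcdef, hνdef]
  have hdual : ∀ y : A ⊗[R] M, (∑ i, Fc i y • ((1 : A) ⊗ₜ[R] s i)) = y := by
    intro y
    induction y using TensorProduct.induction_on with
    | zero => simp
    | tmul a m =>
      calc ∑ i, Fc i (a ⊗ₜ[R] m) • ((1 : A) ⊗ₜ[R] s i)
          = ∑ i, a • ((1 : A) ⊗ₜ[R] (f i m • s i)) := by
            refine Finset.sum_congr rfl fun i _ => ?_
            rw [hFctmul, Algebra.smul_def, mul_smul, algebraMap_smul, smul_comm,
              ← tmul_smul]
        _ = a • ((1 : A) ⊗ₜ[R] (∑ i, f i m • s i)) := by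
            rw [← Finset.smul_sum, ← tmul_sum]
        _ = a ⊗ₜ[R] m := by rw [hf m, smul_tmul', smul_eq_mul, mul_one]
    | add u v hu hv =>
      simp only [map_add, add_smul, Finset.sum_add_distrib, hu, hv]
  -- the maps m ↦ m ⊗ s i, base changed
  set Ti : Fin n → (A ⊗[R] M →ₗ[A] A ⊗[R] (M ⊗[R] M)) :=
    fun i => ((TensorProduct.mk R M M).flip (s i)).baseChange A with hTidef
  have hζT : ∀ (i) (y : A ⊗[R] M), Ti i y = ζ.symm (y ⊗ₜ[A] ((1 : A) ⊗ₜ[R] s i)) := by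
    intro i y
    induction y using TensorProduct.induction_on with
    | zero => simp
    | tmul a m =>
      simp [hTidef, hζdef, TensorProduct.AlgebraTensorModule.distribBaseChange]
    | add u v hu hv =>
      rw [map_add, hu, hv, ← map_add, ← add_tmul]
  -- pointwise formula for baseChange of θ
  have hθA : ∀ y : A ⊗[R] M, (θ.baseChange A) y =
      ∑ i, ((f i).baseChange A) ((φ.toLinearMap.baseChange A) (Ti i y)) := by
    intro y
    induction y using TensorProduct.induction_on with
    | zero => simp
    | tmul a m =>
      rw [LinearMap.baseChange_tmul, hθapp, tmul_sum]
      refine Finset.sum_congr rfl fun i _ => ?_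
      simp [hTidef]
    | add u v hu hv =>
      simp only [map_add, hu, hv, Finset.sum_add_distrib]
  -- the unit c
  set c : A := b.repr ((φ.toLinearMap.baseChange A) (ζ.symm (x ⊗ₜ[A] x))) 0 with hcdef
  have hcx : (φ.toLinearMap.baseChange A) (ζ.symm (x ⊗ₜ[A] x)) = c • x := hrepr _
  have hcu : IsUnit c := by
    set bT := Module.Basis.tensorProduct b b with hbTdef
    set bE := bT.map E with hbEdef
    have hbE0 : bE (0, 0) = c • x := by
      rw [hbEdef, Module.Basis.map_apply, hbTdef, Module.Basis.tensorProduct_apply, hEdef]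
      rw [← hcx]
      rfl
    set d : A := bE.repr x (0, 0) with hddef
    have hx1 : x = d • bE (0, 0) := by
      have h1 := bE.sum_repr x
      rw [show (Finset.univ : Finset (Fin 1 × Fin 1)) = {(0, 0)} from rfl,
        Finset.sum_singleton] at h1
      exact h1.symm
    rw [hbE0, ← mul_smul] at hx1
    have : d * c = 1 := by
      have := hcoeff (d * c) 1 (by rw [one_smul, ← hx1])
      exact this
    exact IsUnit.of_mul_eq_one (a := c) d (by rw [mul_comm]; exact this)
  -- coordinates of 1 ⊗ s i
  set av : Fin n → A := fun i => b.repr ((1 : A) ⊗ₜ[R] s i) 0 with havdef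
  have hai : ∀ i, (1 : A) ⊗ₜ[R] s i = av i • x := fun i => hrepr _
  have hsum : (∑ i, Fc i x * av i) = 1 := by
    have h2 := hdual x
    have h3 : ∑ i, Fc i x • ((1 : A) ⊗ₜ[R] s i) = (∑ i, Fc i x * av i) • x := by
      rw [Finset.sum_smul]
      refine Finset.sum_congr rfl fun i _ => ?_
      rw [hai i, smul_smul]
    rw [h3] at h2
    exact hcoeff _ _ (by rw [h2, one_smul])
  -- value of θ base changed at x
  have hgx : ν ((θ.baseChange A) x) = c := by
    rw [hθA x]
    have hterm : ∀ i, ((f i).baseChange A) ((φ.toLinearMap.baseChange A) (Ti i x)) =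
        (av i * c) • ((f i).baseChange A) x := by
      intro i
      rw [hζT i x, hai i]
      have : x ⊗ₜ[A] (av i • x) = av i • (x ⊗ₜ[A] x) := tmul_smul _ _ _
      rw [this, map_smul, map_smul, hcx, ← mul_smul, map_smul]
    rw [Finset.sum_congr rfl fun i _ => hterm i]
    rw [map_sum]
    have : ∀ i, ν ((av i * c) • ((f i).baseChange A) x) = (av i * c) * Fc i x := by
      intro i
      rw [map_smul, smul_eq_mul, hFcdef]
      rfl
    rw [Finset.sum_congr rfl fun i _ => this i]
    calc ∑ i, (av i * c) * Fc i x = c * ∑ i, Fc i x * av i := by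
          rw [Finset.mul_sum]; exact Finset.sum_congr rfl fun i _ => by ring
      _ = c := by rw [hsum, mul_one]
  -- bijectivity of θ base changed
  have hprop : ∀ y : A ⊗[R] M, ν ((θ.baseChange A) y) = b.repr y 0 * c := by
    intro y
    conv_lhs => rw [hrepr y]
    rw [map_smul, map_smul, hgx, smul_eq_mul]
  obtain ⟨u, hu⟩ := hcu
  have hθbij : Function.Bijective (θ.baseChange A) := by
    have hcomp : Function.Bijective (⇑ν ∘ ⇑(θ.baseChange A)) := by
      constructor
      · intro y z hyz
        have h1 : b.repr y 0 * c = b.repr z 0 * c := by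
          rw [← hprop, ← hprop]; exact hyz
        have h2 : b.repr y 0 = b.repr z 0 := by
          have h3 := congrArg (fun w => w * ((u⁻¹ : Aˣ) : A)) h1
          simp only [mul_assoc, ← hu, Units.mul_inv, mul_one] at h3
          exact h3
        rw [hrepr y, hrepr z, h2]
      · intro z
        refine ⟨(z * ((u⁻¹ : Aˣ) : A)) • x, ?_⟩
        show ν ((θ.baseChange A) _) = z
        rw [hprop, map_smul, Finsupp.smul_apply, hreprx, smul_eq_mul, mul_one, mul_assoc]
        rw [show ((u⁻¹ : Aˣ) : A) * c = 1 from by rw [← hu]; exact u.inv_mul]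
        rw [mul_one]
    have heq : ⇑(θ.baseChange A) = ⇑ν.symm ∘ (⇑ν ∘ ⇑(θ.baseChange A)) := by
      funext y; simp
    rw [heq]
    exact ν.symm.bijective.comp hcomp
  -- bijectivity of mkQ base changed
  have hQbij : Function.Bijective ((Submodule.mkQ I).baseChange A) := by
    constructor
    · have hex := lTensor_exact A (LinearMap.exact_subtype_mkQ I) (Submodule.mkQ_surjective I)
      have hker := hex.linearMap_ker_eq
      have hzero : (LinearMap.lTensor A (Submodule.subtype I)) = 0 := by
        apply TensorProduct.ext'
        intro a i
        rw [LinearMap.lTensor_tmul, LinearMap.zero_apply, Submodule.subtype_apply]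
        have h1 : (i : R) • (a ⊗ₜ[R] (1 : R)) = a ⊗ₜ[R] (i : R) := by
          rw [smul_tmul', smul_tmul, smul_eq_mul, mul_one]
        rw [← h1, ← algebraMap_smul A (i : R), halgI _ i.2, zero_smul]
      have hinj : Function.Injective (LinearMap.lTensor A (Submodule.mkQ I)) := by
        rw [← LinearMap.ker_eq_bot, hker, hzero, LinearMap.range_zero]
      rw [show ⇑((Submodule.mkQ I).baseChange A) = ⇑(LinearMap.lTensor A (Submodule.mkQ I))
        from LinearMap.baseChange_eq_ltensor _]
      exact hinj
    · rw [show ⇑((Submodule.mkQ I).baseChange A) = ⇑(LinearMap.lTensor A (Submodule.mkQ I))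
        from LinearMap.baseChange_eq_ltensor _]
      exact LinearMap.lTensor_surjective A (Submodule.mkQ_surjective I)
  have hsplit : (Submodule.mkQ I ∘ₗ θ).baseChange A =
      ((Submodule.mkQ I).baseChange A) ∘ₗ (θ.baseChange A) := by
    rw [LinearMap.baseChange_comp]
  rw [hsplit]
  exact hQbij.comp hθbij

theorem my_forward [Module.Finite R M] [Module.Projective R M]
    (φ : (M ⊗[R] M) ≃ₗ[R] M) :
    Nonempty (M ≃ₗ[R] (R ⧸ ((⊤ : Submodule R M).annihilator))) := by
  classical
  obtain ⟨e, he, hann⟩ := my_exists_idem (R := R) (M := M)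
  obtain ⟨n, s, f, hf⟩ := my_exists_dual_system (R := R) (M := M)
  set I := (⊤ : Submodule R M).annihilator with hI
  set θ : M →ₗ[R] R :=
    ∑ i, (f i) ∘ₗ φ.toLinearMap ∘ₗ ((TensorProduct.mk R M M).flip (s i)) with hθdef
  set ρ : M →ₗ[R] (R ⧸ I) := (Submodule.mkQ I) ∘ₗ θ with hρdef
  suffices hb : Function.Bijective ρ by exact ⟨LinearEquiv.ofBijective ρ hb⟩
  apply bijective_of_localized_maximal
  intro J hJ
  apply my_bijective_localized_of_baseChange
  haveI := hJ.isPrime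
  by_cases heJ : e ∈ J
  · -- both sides are subsingletons
    have h1e : (1 : R) - e ∈ J.primeCompl := by
      intro h
      exact hJ.ne_top ((Ideal.eq_top_iff_one J).mpr (by simpa using J.add_mem h heJ))
    have h1eI : (1 : R) - e ∈ I := by
      rw [hann]; exact Ideal.subset_span rfl
    haveI s1 : Subsingleton ((Localization J.primeCompl) ⊗[R] M) :=
      my_subsingleton_baseChange _ _ h1e
        (fun m => Submodule.mem_annihilator.mp h1eI m Submodule.mem_top)
    haveI s2 : Subsingleton ((Localization J.primeCompl) ⊗[R] (R ⧸ I)) := by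
      refine my_subsingleton_baseChange _ _ h1e (fun z => ?_)
      obtain ⟨r, rfl⟩ := Submodule.Quotient.mk_surjective I z
      rw [← Submodule.Quotient.mk_smul, Submodule.Quotient.mk_eq_zero]
      rw [hann]
      exact Ideal.mem_span_singleton'.mpr ⟨r, by rw [smul_eq_mul, mul_comm]⟩
    exact ⟨fun a b _ => Subsingleton.elim a b, fun y => ⟨0, Subsingleton.elim _ _⟩⟩
  · rw [hρdef, hθdef]
    exact my_local_case φ e he hann n s f hf J hJ.isPrime heJ (Localization J.primeCompl)

end Forward

/-- For a finitely generated projective module `M` over a commutative ring `R`,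
with `I_M = Ann_R(M)`, the following are equivalent:
(i) `M ⊗_R M ≅ M`;  (ii) `M ≅ R/I_M`;
(iii) `M ≅ Re` for some idempotent `e` of `R`, and then `I_M = R(1-e)`. -/
theorem idempotent_picS_classes (R : Type) [CommRing R]
    (M : Type) [AddCommGroup M] [Module R M]
    (hfin : Module.Finite R M) (hproj : Module.Projective R M) :
    (Nonempty ((M ⊗[R] M) ≃ₗ[R] M) ↔
      Nonempty (M ≃ₗ[R] (R ⧸ ((⊤ : Submodule R M).annihilator))))
    ∧ (Nonempty (M ≃ₗ[R] (R ⧸ ((⊤ : Submodule R M).annihilator))) ↔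
      ∃ e : R, IsIdempotentElem e ∧
        Nonempty (M ≃ₗ[R] ↥(Ideal.span {e})) ∧
        (⊤ : Submodule R M).annihilator = Ideal.span {1 - e}) := by
  haveI := hfin
  haveI := hproj
  obtain ⟨e, he, hann⟩ := my_exists_idem (R := R) (M := M)
  constructor
  · constructor
    · rintro ⟨φ⟩
      exact my_forward φ
    · rintro ⟨g⟩
      exact my_backward g
  · constructor
    · rintro ⟨g⟩
      exact ⟨e, he,
        ⟨g.trans ((Submodule.quotEquivOfEq _ _ hann).trans (myQuotSpanEquiv e he))⟩, hann⟩
    · rintro ⟨e', he', ⟨g⟩, hann'⟩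
      exact ⟨g.trans ((myQuotSpanEquiv e' he').symm.trans
        (Submodule.quotEquivOfEq _ _ hann'.symm))⟩
end

section
/- Let α = (D_g, α_g)_{g∈G} be a unital partial action of a group G on a commutative ring R, with D_g = R·1_g. Let E be a central R-R-bimodule with 1_{g⁻¹}x = x for all x ∈ E, and define E_g to be E with new R-action r • x = α_{g⁻¹}(r 1_g)·x. Then: if E is a finitely generated projective R-module, so is E_g; if E has rank ≤ 1 at every prime, so does E_g; and for central R-R-bimodules E, F both annihilated by 1−1_{g⁻¹}, there is an R-module isomorphism (E ⊗_R F)_g ≅ E_g ⊗_R F_g. -/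
open TensorProduct

/-- A unital partial action `α = (D_g, α_g)` of a group `G` on a commutative
ring `R`: each `D_g` is the ideal generated by the idempotent `e g` and `α g`
is a ring isomorphism `D_{g⁻¹} → D_g`, encoded as a map `R → R` depending only
on the `D_{g⁻¹}`-component. -/
structure PartialActionCRing (G : Type) [Group G] (R : Type) [CommRing R] where
  e : G → R
  α : G → R → R
  idem : ∀ g, IsIdempotentElem (e g)
  e_one : e 1 = 1
  α_one : ∀ r, α 1 r = r
  proj : ∀ g r, α g r = α g (r * e g⁻¹)
  map_add : ∀ g r s, α g (r + s) = α g r + α g s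
  map_mul' : ∀ g r s, α g (r * s * e g⁻¹) = α g r * α g s
  map_e : ∀ g, α g (e g⁻¹) = e g
  mem : ∀ g r, α g r * e g = α g r
  inv_comp : ∀ g r, α g⁻¹ (α g (r * e g⁻¹)) = r * e g⁻¹
  comp : ∀ g h r,
    α g (α h (r * e h⁻¹) * e g⁻¹) = α (g * h) (r * e (g * h)⁻¹) * e g
  rangeEq : ∀ g h, α g (e h * e g⁻¹) = e g * e (g * h)

variable {G R : Type} [Group G] [CommRing R]

namespace PartialActionCRing
variable (pa : PartialActionCRing G R) (g : G)

lemma map_zero' (h : G) : pa.α h 0 = 0 := by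
  have h0 := pa.map_add h 0 0
  rw [add_zero] at h0
  exact (add_eq_left.mp h0.symm)

lemma mul'' (h : G) (r s : R) : pa.α h (r * s) = pa.α h r * pa.α h s := by
  rw [pa.proj h (r * s)]; exact pa.map_mul' h r s

lemma tau_def (r : R) : pa.α g⁻¹ (r * pa.e g) = pa.α g⁻¹ r := by
  have h := pa.proj g⁻¹ r
  rw [inv_inv] at h
  exact h.symm

lemma st (r : R) : pa.α g (pa.α g⁻¹ r) = r * pa.e g := by
  have h2 := pa.inv_comp g⁻¹ r
  rw [inv_inv] at h2
  rw [← pa.tau_def g r]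
  exact h2

lemma ts (r : R) : pa.α g⁻¹ (pa.α g r) = r * pa.e g⁻¹ := by
  rw [pa.proj g r]; exact pa.inv_comp g r

lemma s_one : pa.α g 1 = pa.e g := by
  rw [pa.proj g 1, one_mul]; exact pa.map_e g

lemma t_eg : pa.α g⁻¹ (pa.e g) = pa.e g⁻¹ := by
  have h := pa.map_e g⁻¹; rwa [inv_inv] at h

lemma t_one : pa.α g⁻¹ 1 = pa.e g⁻¹ := by
  rw [← pa.tau_def g 1, one_mul]; exact pa.t_eg g

end PartialActionCRing

section TwistLemmas
variable (pa : PartialActionCRing G R) (g : G)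
variable {E B : Type} [AddCommGroup E] [Module R E] [AddCommGroup B] [Module R B]

lemma twist_apply (φ : E ≃+ B)
    (hφ : ∀ (r : R) (x : E), φ (pa.α g⁻¹ (r * pa.e g) • x) = r • φ x)
    (r : R) (x : E) : φ (pa.α g⁻¹ r • x) = r • φ x := by
  rw [← pa.tau_def g r]; exact hφ r x

lemma twist_symm (φ : E ≃+ B)
    (hφ : ∀ (r : R) (x : E), φ (pa.α g⁻¹ (r * pa.e g) • x) = r • φ x)
    (r : R) (b : B) : φ.symm (r • b) = pa.α g⁻¹ r • φ.symm b := by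
  apply φ.injective
  rw [φ.apply_symm_apply, twist_apply pa g φ hφ, φ.apply_symm_apply]

lemma twist_fwd (hE : ∀ x : E, pa.e g⁻¹ • x = x) (φ : E ≃+ B)
    (hφ : ∀ (r : R) (x : E), φ (pa.α g⁻¹ (r * pa.e g) • x) = r • φ x)
    (r : R) (x : E) : φ (r • x) = pa.α g r • φ x := by
  have h1 : pa.α g⁻¹ (pa.α g r) • x = r • x := by
    rw [pa.ts, mul_smul, hE x]
  rw [← h1, twist_apply pa g φ hφ]

lemma twist_eg (hE : ∀ x : E, pa.e g⁻¹ • x = x) (φ : E ≃+ B)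
    (hφ : ∀ (r : R) (x : E), φ (pa.α g⁻¹ (r * pa.e g) • x) = r • φ x)
    (b : B) : pa.e g • b = b := by
  have h := twist_apply pa g φ hφ (pa.e g) (φ.symm b)
  rw [pa.t_eg, hE _, φ.apply_symm_apply] at h
  exact h.symm

end TwistLemmas

lemma algebraMap_idem_eq_one (S : Submonoid R) (x : R)
    (hx : IsIdempotentElem x) (hxS : x ∈ S) :
    algebraMap R (Localization S) x = 1 := by
  have hu : IsUnit (algebraMap R (Localization S) x) :=
    IsLocalization.map_units _ ⟨x, hxS⟩
  have h2 : algebraMap R (Localization S) x * algebraMap R (Localization S) x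
      = algebraMap R (Localization S) x * 1 := by
    rw [mul_one, ← map_mul, hx]
  exact hu.mul_left_cancel h2

/-- `B` is (isomorphic to) the twisted module `A_g`: the same abelian group as
`A`, with `R`-action `r • x = α_{g⁻¹}(r·1_g)·x`.  (Here `A` is assumed to be
annihilated by `1 - 1_{g⁻¹}`.) -/
def IsTwistOf (pa : PartialActionCRing G R) (g : G) (A B : Type)
    [AddCommGroup A] [Module R A] [AddCommGroup B] [Module R B] : Prop :=
  ∃ φ : A ≃+ B, ∀ (r : R) (x : A), φ (pa.α g⁻¹ (r * pa.e g) • x) = r • φ x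

/-- `M` has rank `≤ 1` at every prime of `R`. -/
def RankLeOne (R : Type) [CommRing R] (M : Type) [AddCommGroup M] [Module R M] : Prop :=
  ∀ (p : Ideal R) [p.IsPrime],
    Subsingleton (LocalizedModule p.primeCompl M) ∨
      Nonempty (LocalizedModule p.primeCompl M ≃ₗ[Localization p.primeCompl]
        Localization p.primeCompl)

/-- Properties of the twist `E ↦ E_g` (`E` a central `R`-`R`-bimodule with
`1_{g⁻¹}x = x` for all `x`, and `E_g` the same group with action
`r • x = α_{g⁻¹}(r 1_g) x`): it preserves finitely generated projective
modules, preserves rank `≤ 1`, and `(E ⊗_R F)_g ≅ E_g ⊗_R F_g`. -/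
theorem twist_properties (pa : PartialActionCRing G R) (g : G) :
    (∀ (E B : Type) [AddCommGroup E] [Module R E] [AddCommGroup B] [Module R B],
      (∀ x : E, pa.e g⁻¹ • x = x) → IsTwistOf pa g E B →
        ((Module.Finite R E → Module.Projective R E →
            Module.Finite R B ∧ Module.Projective R B)
          ∧ (RankLeOne R E → RankLeOne R B)))
    ∧ (∀ (E F BE BF C : Type)
        [AddCommGroup E] [Module R E] [AddCommGroup F] [Module R F]
        [AddCommGroup BE] [Module R BE] [AddCommGroup BF] [Module R BF]
        [AddCommGroup C] [Module R C],
        (∀ x : E, pa.e g⁻¹ • x = x) → (∀ x : F, pa.e g⁻¹ • x = x) →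
        IsTwistOf pa g E BE → IsTwistOf pa g F BF →
        IsTwistOf pa g (E ⊗[R] F) C →
        Nonempty (C ≃ₗ[R] (BE ⊗[R] BF))) := by
  constructor
  · intro E B _ _ _ _ hE hTw
    obtain ⟨φ, hφ⟩ := hTw
    classical
    constructor
    · intro hFin hProj
      constructor
      · -- Finite
        obtain ⟨S, hS⟩ := hFin.fg_top
        refine ⟨⟨S.image φ, ?_⟩⟩
        rw [eq_top_iff]
        rintro b -
        have key : ∀ x ∈ Submodule.span R (S : Set E),
            φ x ∈ Submodule.span R ((S.image φ : Finset B) : Set B) := by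
          intro x hx
          induction hx using Submodule.span_induction with
          | mem y hy =>
            exact Submodule.subset_span (by simpa using Finset.mem_image_of_mem φ hy)
          | zero => simp
          | add a b _ _ ha hb => rw [map_add]; exact Submodule.add_mem _ ha hb
          | smul r y _ hy =>
            rw [twist_fwd pa g hE φ hφ]
            exact Submodule.smul_mem _ _ hy
        have h2 := key (φ.symm b) (hS ▸ Submodule.mem_top)
        rwa [φ.apply_symm_apply] at h2
      · -- Projective
        obtain ⟨sE, hsE⟩ := Module.projective_def'.mp hProj
        have hsmul : ∀ (r : R) (f : E →₀ R),
            Finsupp.mapRange (pa.α g) (pa.map_zero' g) (pa.α g⁻¹ r • f)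
              = r • Finsupp.mapRange (pa.α g) (pa.map_zero' g) f := by
          intro r f
          ext a
          simp only [Finsupp.mapRange_apply, Finsupp.smul_apply, smul_eq_mul]
          rw [pa.mul'', pa.st]
          calc r * pa.e g * pa.α g (f a) = r * (pa.α g (f a) * pa.e g) := by ring
          _ = r * pa.α g (f a) := by rw [pa.mem g]
        refine Module.projective_def'.mpr ⟨⟨⟨fun b =>
            Finsupp.mapDomain φ (Finsupp.mapRange (pa.α g) (pa.map_zero' g) (sE (φ.symm b))),
            ?_⟩, ?_⟩, ?_⟩
        · intro a b
          rw [map_add, map_add, Finsupp.mapRange_add (pa.map_add g), Finsupp.mapDomain_add]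
        · intro r b
          dsimp only [RingHom.id_apply]
          rw [twist_symm pa g φ hφ, map_smul, hsmul, Finsupp.mapDomain_smul]
        · ext b
          simp only [LinearMap.coe_comp, LinearMap.coe_mk, AddHom.coe_mk, Function.comp_apply,
            LinearMap.id_apply]
          have hf : Finsupp.linearCombination R id (sE (φ.symm b)) = φ.symm b :=
            LinearMap.congr_fun hsE (φ.symm b)
          rw [Finsupp.linearCombination_mapDomain, Finsupp.linearCombination_apply,
            Finsupp.sum_mapRange_index (f := pa.α g) (h := fun i a => a • (id ∘ ⇑φ) i) (fun a => zero_smul R _)]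
          have h2 : ((sE (φ.symm b)).sum fun a c => pa.α g c • (id ∘ φ) a)
              = (sE (φ.symm b)).sum fun a c => φ (c • a) :=
            Finsupp.sum_congr (fun a _ => (twist_fwd pa g hE φ hφ _ _).symm)
          rw [h2, ← map_finsuppSum]
          rw [show ((sE (φ.symm b)).sum fun a c => c • a)
              = Finsupp.linearCombination R id (sE (φ.symm b)) from
            (Finsupp.linearCombination_apply R _).symm]
          rw [hf, φ.apply_symm_apply]
    · -- Rank
      intro hRk p hp
      haveI := hp
      by_cases hin : pa.e g ∈ p
      · left
        have hB : ∀ b : B, pa.e g • b = b := twist_eg pa g hE φ hφ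
        have hu : (1 : R) - pa.e g ∈ p.primeCompl := by
          intro hmem
          have h1 : (1 : R) ∈ p := by
            have := p.add_mem hmem hin; simpa using this
          exact hp.ne_top (p.eq_top_of_isUnit_mem h1 isUnit_one)
        refine subsingleton_of_forall_eq 0 fun z => ?_
        induction z using LocalizedModule.induction_on with
        | h b s =>
          rw [show (0 : LocalizedModule p.primeCompl B) = LocalizedModule.mk 0 1 from
            (LocalizedModule.zero_mk 1).symm, LocalizedModule.mk_eq]
          refine ⟨⟨1 - pa.e g, hu⟩, ?_⟩
          simp [Submonoid.smul_def, sub_smul, hB b]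
      · -- e g ∉ p
        let q : Ideal R :=
          { carrier := {r | pa.α g r ∈ p}
            add_mem' := fun {a b} ha hb => by
              simp only [Set.mem_setOf_eq, pa.map_add g] at *
              exact p.add_mem ha hb
            zero_mem' := by simp [pa.map_zero' g]
            smul_mem' := fun c x hx => by
              simp only [Set.mem_setOf_eq, smul_eq_mul, pa.mul'' g] at *
              exact p.mul_mem_left _ hx }
        have hq_mem : ∀ r : R, r ∈ q ↔ pa.α g r ∈ p := fun r => Iff.rfl
        have hqc : ∀ r : R, r ∉ q → pa.α g r ∈ p.primeCompl :=
          fun r hr hmem => hr ((hq_mem r).mpr hmem)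
        haveI hqp : q.IsPrime := by
          constructor
          · intro htop
            apply hin
            have h1 : (1 : R) ∈ q := htop ▸ Submodule.mem_top
            rw [hq_mem, pa.s_one g] at h1
            exact h1
          · intro a b hab
            rw [hq_mem, pa.mul'' g] at hab
            exact hp.mem_or_mem hab
        rcases hRk q with hsub | hne
        · -- E_q subsingleton
          left
          refine subsingleton_of_forall_eq 0 fun z => ?_
          induction z using LocalizedModule.induction_on with
          | h b s =>
            have h0 : (LocalizedModule.mk (φ.symm b) 1 : LocalizedModule q.primeCompl E)
                = LocalizedModule.mk 0 1 := Subsingleton.elim _ _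
            rw [LocalizedModule.mk_eq] at h0
            obtain ⟨u, hu⟩ := h0
            have hu' : (u : R) • φ.symm b = 0 := by
              simpa [Submonoid.smul_def] using hu
            have hb0 : pa.α g u • b = 0 := by
              have h3 := twist_fwd pa g hE φ hφ u (φ.symm b)
              rw [hu', φ.apply_symm_apply, map_zero] at h3
              exact h3.symm
            rw [show (0 : LocalizedModule p.primeCompl B) = LocalizedModule.mk 0 1 from
              (LocalizedModule.zero_mk 1).symm, LocalizedModule.mk_eq]
            exact ⟨⟨pa.α g u, hqc _ u.2⟩, by simp [Submonoid.smul_def, hb0]⟩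
        · -- E_q free of rank one
          right
          obtain ⟨ε⟩ := hne
          have heg1 : algebraMap R (Localization p.primeCompl) (pa.e g) = 1 :=
            algebraMap_idem_eq_one _ _ (pa.idem g) hin
          have hegi_q : pa.e g⁻¹ ∉ q := by
            intro hmem
            rw [hq_mem] at hmem
            rw [pa.map_e g] at hmem
            exact hin hmem
          have hegi1 : algebraMap R (Localization q.primeCompl) (pa.e g⁻¹) = 1 :=
            algebraMap_idem_eq_one _ _ (pa.idem g⁻¹) hegi_q
          let fσ : R →+* Localization p.primeCompl :=
            { toFun := fun r => algebraMap R _ (pa.α g r)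
              map_one' := by rw [pa.s_one g]; exact heg1
              map_mul' := fun a b => by rw [pa.mul'' g, map_mul]
              map_add' := fun a b => by rw [pa.map_add g, map_add]
              map_zero' := by rw [pa.map_zero' g, map_zero] }
          let fτ : R →+* Localization q.primeCompl :=
            { toFun := fun r => algebraMap R _ (pa.α g⁻¹ r)
              map_one' := by rw [pa.t_one g]; exact hegi1
              map_mul' := fun a b => by rw [pa.mul'' g⁻¹, map_mul]
              map_add' := fun a b => by rw [pa.map_add g⁻¹, map_add]
              map_zero' := by rw [pa.map_zero' g⁻¹, map_zero] }
          have hfσ_units : ∀ y : q.primeCompl, IsUnit (fσ y) :=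
            fun y => IsLocalization.map_units _ ⟨pa.α g y, hqc _ y.2⟩
          have htauc : ∀ r : R, r ∉ p → pa.α g⁻¹ r ∈ q.primeCompl := by
            intro r hr hmem
            have hmem' : pa.α g⁻¹ r ∈ q := hmem
            rw [hq_mem, pa.st g] at hmem'
            have hmem := hmem'
            rcases hp.mem_or_mem hmem with h | h
            exacts [hr h, hin h]
          have hfτ_units : ∀ y : p.primeCompl, IsUnit (fτ y) :=
            fun y => IsLocalization.map_units _ ⟨pa.α g⁻¹ y, htauc _ y.2⟩
          let f' : Localization q.primeCompl →+* Localization p.primeCompl :=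
            IsLocalization.lift hfσ_units
          let g' : Localization p.primeCompl →+* Localization q.primeCompl :=
            IsLocalization.lift hfτ_units
          have hf'alg : ∀ r : R, f' (algebraMap R (Localization q.primeCompl) r)
              = algebraMap R (Localization p.primeCompl) (pa.α g r) :=
            fun r => IsLocalization.lift_eq _ r
          have hg'alg : ∀ r : R, g' (algebraMap R (Localization p.primeCompl) r)
              = algebraMap R (Localization q.primeCompl) (pa.α g⁻¹ r) :=
            fun r => IsLocalization.lift_eq _ r
          have hfg : ∀ x : Localization p.primeCompl, f' (g' x) = x := by
            have hcomp : f'.comp g' = RingHom.id _ := by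
              apply IsLocalization.ringHom_ext p.primeCompl
              ext r
              simp only [RingHom.coe_comp, Function.comp_apply, RingHom.id_apply]
              rw [hg'alg, hf'alg, pa.st g, map_mul, heg1, mul_one]
            exact fun x => DFunLike.congr_fun hcomp x
          have hgf : ∀ x : Localization q.primeCompl, g' (f' x) = x := by
            have hcomp : g'.comp f' = RingHom.id _ := by
              apply IsLocalization.ringHom_ext q.primeCompl
              ext r
              simp only [RingHom.coe_comp, Function.comp_apply, RingHom.id_apply]
              rw [hf'alg, hg'alg, pa.ts g, map_mul, hegi1, mul_one]
            exact fun x => DFunLike.congr_fun hcomp x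
          -- the localized map
          let lamB : B →ₗ[R] Localization p.primeCompl :=
            { toFun := fun b => f' (ε (LocalizedModule.mk (φ.symm b) 1))
              map_add' := fun a b => by
                have h1 : LocalizedModule.mk (φ.symm (a + b)) (1 : q.primeCompl)
                    = LocalizedModule.mk (φ.symm a) 1 + LocalizedModule.mk (φ.symm b) 1 := by
                  rw [map_add, LocalizedModule.mk_add_mk]; simp
                rw [h1, map_add, map_add]
              map_smul' := fun r b => by
                dsimp only [RingHom.id_apply]
                rw [twist_symm pa g φ hφ r b, ← LocalizedModule.smul'_mk,
                  ← algebraMap_smul (Localization q.primeCompl) (pa.α g⁻¹ r),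
                  LinearEquiv.map_smul, smul_eq_mul, map_mul, hf'alg, pa.st g,
                  map_mul, heg1, mul_one, Algebra.smul_def] }
          have hunit : ∀ x : p.primeCompl,
              IsUnit ((algebraMap R (Module.End R (Localization p.primeCompl))) (x : R)) := by
            intro x
            have hu : IsUnit (algebraMap R (Localization p.primeCompl) (x : R)) :=
              IsLocalization.map_units _ x
            rw [Module.End.isUnit_iff]
            constructor
            · intro a b hab
              simp only [Module.algebraMap_end_apply, Algebra.smul_def] at hab
              exact hu.mul_left_cancel hab
            · intro y
              obtain ⟨u, hu'⟩ := hu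
              refine ⟨(↑u⁻¹ : Localization p.primeCompl) * y, ?_⟩
              simp only [Module.algebraMap_end_apply, Algebra.smul_def, ← hu']
              rw [← mul_assoc, Units.mul_inv, one_mul]
          let Lam := LocalizedModule.lift p.primeCompl lamB hunit
          have hLam1 : ∀ b : B, Lam (LocalizedModule.mk b 1) = lamB b := by
            intro b
            rw [LocalizedModule.lift_mk]
            have h1 : (hunit 1).unit = 1 := Units.ext (by simp)
            rw [h1]
            simp
          have hLammk : ∀ (b : B) (s : p.primeCompl),
              (s : R) • Lam (LocalizedModule.mk b s) = lamB b := by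
            intro b s
            rw [← LinearMap.map_smul, LocalizedModule.smul'_mk, ← Submonoid.smul_def,
              LocalizedModule.mk_cancel, hLam1]
          let Lam' := LinearMap.extendScalarsOfIsLocalization p.primeCompl
            (Localization p.primeCompl) Lam
          have hLam' : ∀ z, Lam' z = Lam z := fun z => rfl
          refine ⟨LinearEquiv.ofBijective Lam' ⟨?_, ?_⟩⟩
          · -- injective
            rw [injective_iff_map_eq_zero]
            intro z hz
            induction z using LocalizedModule.induction_on with
            | h b s =>
              have h0 : lamB b = 0 := by
                rw [← hLammk b s, ← hLam', hz, smul_zero]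
              have hw : ε (LocalizedModule.mk (φ.symm b) 1) = 0 := by
                have h0' : f' (ε (LocalizedModule.mk (φ.symm b) 1)) = 0 := h0
                have h3 := congrArg g' h0'
                rwa [hgf, map_zero] at h3
              have hmk0 : (LocalizedModule.mk (φ.symm b) 1 : LocalizedModule q.primeCompl E)
                  = LocalizedModule.mk 0 1 := by
                have h3 := congrArg ε.symm hw
                rw [LinearEquiv.symm_apply_apply, map_zero] at h3
                rw [h3, LocalizedModule.zero_mk]
              rw [LocalizedModule.mk_eq] at hmk0
              obtain ⟨u, hu⟩ := hmk0
              have hu' : (u : R) • φ.symm b = 0 := by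
                simpa [Submonoid.smul_def] using hu
              have hb0 : pa.α g u • b = 0 := by
                have h3 := twist_fwd pa g hE φ hφ u (φ.symm b)
                rw [hu', φ.apply_symm_apply, map_zero] at h3
                exact h3.symm
              rw [show (0 : LocalizedModule p.primeCompl B) = LocalizedModule.mk 0 1 from
                (LocalizedModule.zero_mk 1).symm, LocalizedModule.mk_eq]
              exact ⟨⟨pa.α g u, hqc _ u.2⟩, by simp [Submonoid.smul_def, hb0]⟩
          · -- surjective
            intro y
            obtain ⟨x, t, hxt⟩ : ∃ (x : E) (t : q.primeCompl),
                LocalizedModule.mk x t = ε.symm 1 := by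
              induction (ε.symm 1) using LocalizedModule.induction_on with
              | h a b => exact ⟨a, b, rfl⟩
            have hεxt : ε (LocalizedModule.mk x t) = 1 := by
              rw [hxt, LinearEquiv.apply_symm_apply]
            have hval : Lam (LocalizedModule.mk (φ x) 1)
                = algebraMap R (Localization p.primeCompl) (pa.α g t) := by
              rw [hLam1]
              show f' (ε (LocalizedModule.mk (φ.symm (φ x)) 1)) = _
              rw [φ.symm_apply_apply]
              have h1 : (LocalizedModule.mk x 1 : LocalizedModule q.primeCompl E)
                  = algebraMap R (Localization q.primeCompl) (t : R)
                    • LocalizedModule.mk x t := by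
                rw [algebraMap_smul, LocalizedModule.smul'_mk, ← Submonoid.smul_def,
                  LocalizedModule.mk_cancel]
              rw [h1, LinearEquiv.map_smul, hεxt, smul_eq_mul, mul_one, hf'alg]
            have hvu : IsUnit (algebraMap R (Localization p.primeCompl) (pa.α g t)) :=
              IsLocalization.map_units _ ⟨pa.α g t, hqc _ t.2⟩
            obtain ⟨u, hu⟩ := hvu
            refine ⟨(y * ↑u⁻¹) • LocalizedModule.mk (φ x) 1, ?_⟩
            rw [LinearMap.map_smul, hLam', hval, ← hu, smul_eq_mul, mul_assoc,
              Units.inv_mul, mul_one]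
  · -- Tensor
    intro E F BE BF C _ _ _ _ _ _ _ _ _ _ hE hF hTE hTF hTC
    obtain ⟨φE, hφE⟩ := hTE
    obtain ⟨φF, hφF⟩ := hTF
    obtain ⟨φT, hφT⟩ := hTC
    let f0 : E →+ F →+ (BE ⊗[R] BF) :=
      { toFun := fun x =>
          { toFun := fun y => φE x ⊗ₜ[R] φF y
            map_zero' := by simp
            map_add' := fun y1 y2 => by rw [map_add, TensorProduct.tmul_add] }
        map_zero' := by ext y; simp
        map_add' := fun x1 x2 => by
          ext y; simp [TensorProduct.add_tmul] }
    have hbal : ∀ (r : R) (x : E) (y : F), f0 (r • x) y = f0 x (r • y) := by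
      intro r x y
      show φE (r • x) ⊗ₜ[R] φF y = φE x ⊗ₜ[R] φF (r • y)
      rw [twist_fwd pa g hE φE hφE, twist_fwd pa g hF φF hφF, TensorProduct.smul_tmul]
    let K : E ⊗[R] F →+ BE ⊗[R] BF := TensorProduct.liftAddHom f0 hbal
    have hK : ∀ (x : E) (y : F), K (x ⊗ₜ[R] y) = φE x ⊗ₜ[R] φF y := fun x y => rfl
    have hKs : ∀ (r : R) (z : E ⊗[R] F), K (pa.α g⁻¹ r • z) = r • K z := by
      intro r z
      induction z using TensorProduct.induction_on with
      | zero => simp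
      | tmul x y =>
        rw [TensorProduct.smul_tmul', hK, hK, twist_apply pa g φE hφE,
          TensorProduct.smul_tmul']
      | add a b ha hb => rw [smul_add, map_add, ha, hb, map_add, smul_add]
    let L : BE ⊗[R] BF →ₗ[R] C := TensorProduct.lift (LinearMap.mk₂ R
        (fun a b => φT (φE.symm a ⊗ₜ[R] φF.symm b))
        (fun a1 a2 b => by rw [map_add, TensorProduct.add_tmul, map_add])
        (fun r a b => by
          rw [twist_symm pa g φE hφE, ← TensorProduct.smul_tmul',
            twist_apply pa g φT hφT])
        (fun a b1 b2 => by rw [map_add, TensorProduct.tmul_add, map_add])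
        (fun r a b => by
          rw [twist_symm pa g φF hφF, TensorProduct.tmul_smul,
            twist_apply pa g φT hφT]))
    have hL : ∀ (a : BE) (b : BF), L (a ⊗ₜ[R] b) = φT (φE.symm a ⊗ₜ[R] φF.symm b) :=
      fun a b => rfl
    have hLK : ∀ z : E ⊗[R] F, L (K z) = φT z := by
      intro z
      induction z using TensorProduct.induction_on with
      | zero => simp
      | tmul x y => rw [hK, hL, φE.symm_apply_apply, φF.symm_apply_apply]
      | add a b ha hb => rw [map_add, map_add, ha, hb, map_add]
    have hKL : ∀ w : BE ⊗[R] BF, K (φT.symm (L w)) = w := by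
      intro w
      induction w using TensorProduct.induction_on with
      | zero => simp
      | tmul a b =>
        rw [hL, φT.symm_apply_apply, hK, φE.apply_symm_apply, φF.apply_symm_apply]
      | add a b ha hb => rw [map_add, map_add, map_add, ha, hb]
    exact ⟨{ toFun := fun c => K (φT.symm c)
             map_add' := fun c1 c2 => by rw [map_add, map_add]
             map_smul' := fun r c => by
               dsimp only [RingHom.id_apply]
               rw [twist_symm pa g φT hφT, hKs]
             invFun := L
             left_inv := fun c => by dsimp only; rw [hLK, φT.apply_symm_apply]
             right_inv := fun w => by dsimp only; rw [hKL] }⟩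
end

section
/- Let G, H be finite groups, α and θ unital partial actions of G on R₁ and H on R₂ (commutative k-algebras) with R₁^α = R₂^θ = k, such that R₁ ⊇ k is α-partial Galois and R₂ ⊇ k is θ-partial Galois. Then (R₁ ⊗_k R₂)^{α⊗θ} = k and R₁ ⊗_k R₂ ⊇ k is an (α ⊗_k θ)-partial Galois extension of the group G × H, with partial Galois coordinate system {xᵢ ⊗ u_j, yᵢ ⊗ z_j} obtained from coordinate systems of the two factors. -/
open TensorProduct

variable {G R : Type} [Group G] [CommRing R]

namespace PartialActionCRing

variable (pa : PartialActionCRing G R)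

lemma alpha_zero (g : G) : pa.α g 0 = 0 := by
  have h := pa.map_add g 0 0
  rw [add_zero] at h
  exact (left_eq_add.mp h)

lemma alpha_sum (g : G) {ι : Type*} (s : Finset ι) (f : ι → R) :
    pa.α g (∑ i ∈ s, f i) = ∑ i ∈ s, pa.α g (f i) :=
  map_sum (AddMonoidHom.mk' (pa.α g) (pa.map_add g)) f s

/-- the trace map -/
def tr [Fintype G] (r : R) : R := ∑ g, pa.α g (r * pa.e g⁻¹)

lemma tr_inv [Fintype G] (r : R) (g : G) :
    pa.α g (pa.tr r * pa.e g⁻¹) = pa.tr r * pa.e g := by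
  have h1 : pa.tr r * pa.e g⁻¹ = ∑ g' : G, pa.α g' (r * pa.e g'⁻¹) * pa.e g⁻¹ :=
    Finset.sum_mul _ _ _
  rw [h1, pa.alpha_sum g]
  rw [Finset.sum_congr rfl (fun g' _ => pa.comp g g' r)]
  rw [← Finset.sum_mul]
  unfold tr
  congr 1
  exact Fintype.sum_equiv (Equiv.mulLeft g)
    (fun g' => pa.α (g * g') (r * pa.e (g * g')⁻¹))
    (fun g'' => pa.α g'' (r * pa.e g''⁻¹)) (fun g' => rfl)

variable {k : Type} [CommRing k] [Algebra k R]

lemma tr_mem [Fintype G]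
    (hinv : ∀ r : R, (∀ g, pa.α g (r * pa.e g⁻¹) = r * pa.e g) ↔
      r ∈ Set.range (algebraMap k R)) (r : R) :
    pa.tr r ∈ Set.range (algebraMap k R) :=
  (hinv _).mp (pa.tr_inv r)

lemma tr_algebraMap_mul [Fintype G]
    (hinv : ∀ r : R, (∀ g, pa.α g (r * pa.e g⁻¹) = r * pa.e g) ↔
      r ∈ Set.range (algebraMap k R)) (κ : k) (r : R) :
    pa.tr (algebraMap k R κ * r) = algebraMap k R κ * pa.tr r := by
  unfold tr
  rw [Finset.mul_sum]
  refine Finset.sum_congr rfl fun g _ => ?_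
  have hA : pa.α g (algebraMap k R κ * pa.e g⁻¹) = algebraMap k R κ * pa.e g :=
    (hinv _).mpr ⟨κ, rfl⟩ g
  calc pa.α g (algebraMap k R κ * r * pa.e g⁻¹)
      = pa.α g (algebraMap k R κ) * pa.α g r := pa.map_mul' g _ r
    _ = (algebraMap k R κ * pa.e g) * pa.α g r := by
        rw [pa.proj g (algebraMap k R κ), hA]
    _ = algebraMap k R κ * (pa.α g r * pa.e g) := by ring
    _ = algebraMap k R κ * pa.α g r := by rw [pa.mem]
    _ = algebraMap k R κ * pa.α g (r * pa.e g⁻¹) := by rw [← pa.proj]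

lemma dual_basis [Fintype G] [DecidableEq G] {n : ℕ} (x y : Fin n → R)
    (hGal : ∀ g : G, (∑ i, x i * pa.α g (y i * pa.e g⁻¹)) = if g = 1 then 1 else 0)
    (b : R) : ∑ i, x i * pa.tr (y i * b) = b := by
  unfold tr
  calc ∑ i, x i * ∑ g, pa.α g (y i * b * pa.e g⁻¹)
      = ∑ i, ∑ g : G, x i * (pa.α g (y i * pa.e g⁻¹) * pa.α g b) := by
        refine Finset.sum_congr rfl fun i _ => ?_
        rw [Finset.mul_sum]
        refine Finset.sum_congr rfl fun g _ => ?_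
        rw [pa.map_mul' g (y i) b, ← pa.proj g (y i)]
    _ = ∑ g : G, (∑ i, x i * pa.α g (y i * pa.e g⁻¹)) * pa.α g b := by
        rw [Finset.sum_comm]
        exact Finset.sum_congr rfl fun g _ => by rw [Finset.sum_mul]; exact Finset.sum_congr rfl fun i _ => by ring
    _ = ∑ g : G, (if g = 1 then (1:R) else 0) * pa.α g b := by
        exact Finset.sum_congr rfl fun g _ => by rw [hGal g]
    _ = pa.α 1 b := by simp [ite_mul]
    _ = b := pa.α_one b

lemma tr_surj [Fintype G] [DecidableEq G]
    (hinv : ∀ r : R, (∀ g, pa.α g (r * pa.e g⁻¹) = r * pa.e g) ↔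
      r ∈ Set.range (algebraMap k R))
    {n : ℕ} (x y : Fin n → R)
    (hGal : ∀ g : G, (∑ i, x i * pa.α g (y i * pa.e g⁻¹)) = if g = 1 then 1 else 0) :
    ∃ c : R, pa.tr c = 1 := by
  classical
  let trL : R →ₗ[k] R :=
    { toFun := pa.tr
      map_add' := fun r s => by
        unfold tr
        rw [← Finset.sum_add_distrib]
        exact Finset.sum_congr rfl fun g _ => by rw [add_mul, pa.map_add]
      map_smul' := fun κ r => by
        simp only [RingHom.id_apply, Algebra.smul_def]
        exact pa.tr_algebraMap_mul hinv κ r }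
  let I : Ideal k := Submodule.comap (Algebra.linearMap k R) (LinearMap.range trL)
  by_cases hI : I = ⊤
  · have h1 : (1:k) ∈ I := hI ▸ trivial
    obtain ⟨c, hc⟩ := h1
    exact ⟨c, by have h := hc; simp at h; exact h⟩
  · exfalso
    obtain ⟨m, hm, hIm⟩ := Ideal.exists_le_maximal I hI
    have hfg : (⊤ : Submodule k R).FG := by
      refine ⟨Finset.univ.image x, ?_⟩
      rw [eq_top_iff]
      intro b _
      have hb : b = ∑ i, x i * pa.tr (y i * b) := (pa.dual_basis x y hGal b).symm
      rw [hb]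
      refine Submodule.sum_mem _ fun i _ => ?_
      obtain ⟨κ, hκ⟩ := pa.tr_mem hinv (y i * b)
      have : x i * pa.tr (y i * b) = κ • x i := by
        rw [← hκ, Algebra.smul_def]; ring
      rw [this]
      exact Submodule.smul_mem _ κ (Submodule.subset_span (by simp))
    have hle : (⊤ : Submodule k R) ≤ m • (⊤ : Submodule k R) := by
      intro b _
      have hb : b = ∑ i, x i * pa.tr (y i * b) := (pa.dual_basis x y hGal b).symm
      rw [hb]
      refine Submodule.sum_mem _ fun i _ => ?_
      obtain ⟨κ, hκ⟩ := pa.tr_mem hinv (y i * b)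
      have hx : x i * pa.tr (y i * b) = κ • x i := by
        rw [← hκ, Algebra.smul_def]; ring
      have hκI : κ ∈ I := ⟨y i * b, hκ.symm⟩
      rw [hx]
      exact Submodule.smul_mem_smul (hIm hκI) trivial
    obtain ⟨r, hr1, hr0⟩ :=
      Submodule.exists_sub_one_mem_and_smul_eq_zero_of_fg_of_le_smul m ⊤ hfg hle
    have h10 : r • (1:R) = 0 := hr0 1 trivial
    have hker : algebraMap k R r = 0 := by
      rw [Algebra.algebraMap_eq_smul_one]; exact h10
    have hrI : r ∈ I := ⟨0, by simp [hker]⟩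
    have h1m : (1:k) ∈ m := by
      have := m.sub_mem (hIm hrI) hr1
      simpa using this
    exact hm.ne_top ((Ideal.eq_top_iff_one m).mpr h1m)

end PartialActionCRing

/-- The tensor product of partial Galois extensions is a partial Galois
extension: if `R₁ ⊇ k` is `α`-partial Galois for `G` and `R₂ ⊇ k` is
`θ`-partial Galois for `H`, with `R₁^α = R₂^θ = k`, then for the partial action
`α ⊗_k θ` of `G × H` on `R₁ ⊗_k R₂` (with domains `D_g ⊗ I_h` and isomorphisms
`α_g ⊗ θ_h`) one has `(R₁ ⊗_k R₂)^{α⊗θ} = k`, and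
`{xᵢ ⊗ u_j, yᵢ ⊗ z_j}` is an `(α ⊗_k θ)`-partial Galois coordinate system. -/
theorem tensor_of_partial_galois
    {G H : Type} [Group G] [Group H] [Fintype G] [Fintype H]
    [DecidableEq G] [DecidableEq H]
    (k R₁ R₂ : Type) [CommRing k] [CommRing R₁] [CommRing R₂]
    [Algebra k R₁] [Algebra k R₂]
    (pa₁ : PartialActionCRing G R₁) (pa₂ : PartialActionCRing H R₂)
    -- `R₁^α = k` and `R₂^θ = k`
    (hinv₁ : ∀ r : R₁, (∀ g, pa₁.α g (r * pa₁.e g⁻¹) = r * pa₁.e g) ↔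
      r ∈ Set.range (algebraMap k R₁))
    (hinv₂ : ∀ s : R₂, (∀ h, pa₂.α h (s * pa₂.e h⁻¹) = s * pa₂.e h) ↔
      s ∈ Set.range (algebraMap k R₂))
    -- partial Galois coordinate systems for the two factors
    (n₁ n₂ : ℕ) (x y : Fin n₁ → R₁) (u z : Fin n₂ → R₂)
    (hGal₁ : ∀ g : G,
      (∑ i, x i * pa₁.α g (y i * pa₁.e g⁻¹)) = if g = 1 then 1 else 0)
    (hGal₂ : ∀ h : H,
      (∑ j, u j * pa₂.α h (z j * pa₂.e h⁻¹)) = if h = 1 then 1 else 0)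
    -- the partial action `α ⊗_k θ` of `G × H` on `R₁ ⊗_k R₂`
    (pa' : PartialActionCRing (G × H) (R₁ ⊗[k] R₂))
    (he : ∀ p : G × H, pa'.e p = pa₁.e p.1 ⊗ₜ[k] pa₂.e p.2)
    (hα : ∀ (p : G × H) (r : R₁) (s : R₂),
      pa'.α p (r ⊗ₜ[k] s) = pa₁.α p.1 r ⊗ₜ[k] pa₂.α p.2 s) :
    -- `(R₁ ⊗_k R₂)^{α⊗θ} = k ⊗_k k = k`
    (∀ t : R₁ ⊗[k] R₂,
      (∀ p : G × H, pa'.α p (t * pa'.e p⁻¹) = t * pa'.e p) ↔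
        t ∈ Set.range (algebraMap k (R₁ ⊗[k] R₂)))
    -- `{xᵢ ⊗ u_j, yᵢ ⊗ z_j}` is a partial Galois coordinate system
    ∧ (∀ p : G × H,
        (∑ i, ∑ j, (x i ⊗ₜ[k] u j) * pa'.α p ((y i ⊗ₜ[k] z j) * pa'.e p⁻¹))
          = if p = 1 then 1 else 0) := by
  classical
  -- the full trace on the tensor product, on pure tensors
  have hepinv : ∀ p : G × H, pa'.e p⁻¹ = pa₁.e p.1⁻¹ ⊗ₜ[k] pa₂.e p.2⁻¹ := fun p => he p⁻¹
  have Tpure : ∀ (a : R₁) (b : R₂),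
      (∑ p : G × H, pa'.α p ((a ⊗ₜ[k] b) * pa'.e p⁻¹)) = pa₁.tr a ⊗ₜ[k] pa₂.tr b := by
    intro a b
    rw [Fintype.sum_prod_type]
    have hterm : ∀ (g : G) (h : H),
        pa'.α (g, h) ((a ⊗ₜ[k] b) * pa'.e (g, h)⁻¹)
          = pa₁.α g (a * pa₁.e g⁻¹) ⊗ₜ[k] pa₂.α h (b * pa₂.e h⁻¹) := by
      intro g h
      rw [hepinv (g, h), Algebra.TensorProduct.tmul_mul_tmul, hα]
    calc ∑ g : G, ∑ h : H, pa'.α (g, h) ((a ⊗ₜ[k] b) * pa'.e (g, h)⁻¹)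
        = ∑ g : G, ∑ h : H, pa₁.α g (a * pa₁.e g⁻¹) ⊗ₜ[k] pa₂.α h (b * pa₂.e h⁻¹) :=
          Finset.sum_congr rfl fun g _ => Finset.sum_congr rfl fun h _ => hterm g h
      _ = ∑ g : G, pa₁.α g (a * pa₁.e g⁻¹) ⊗ₜ[k] pa₂.tr b :=
          Finset.sum_congr rfl fun g _ => (TensorProduct.tmul_sum _ _ _).symm
      _ = pa₁.tr a ⊗ₜ[k] pa₂.tr b := (TensorProduct.sum_tmul _ _ _).symm
  have halg : ∀ (κ₁ κ₂ : k),
      (algebraMap k R₁ κ₁) ⊗ₜ[k] (algebraMap k R₂ κ₂)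
        = algebraMap k (R₁ ⊗[k] R₂) (κ₁ * κ₂) := by
    intro κ₁ κ₂
    calc (algebraMap k R₁ κ₁) ⊗ₜ[k] (algebraMap k R₂ κ₂)
        = (algebraMap k R₁ κ₁) ⊗ₜ[k] (κ₂ • (1 : R₂)) := by
          rw [show (algebraMap k R₂ κ₂) = κ₂ • (1 : R₂) from Algebra.algebraMap_eq_smul_one κ₂]
      _ = κ₂ • ((algebraMap k R₁ κ₁) ⊗ₜ[k] (1 : R₂)) := TensorProduct.tmul_smul _ _ _
      _ = κ₂ • algebraMap k (R₁ ⊗[k] R₂) κ₁ := by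
          rw [Algebra.TensorProduct.algebraMap_apply]
      _ = algebraMap k (R₁ ⊗[k] R₂) (κ₁ * κ₂) := by
          rw [Algebra.smul_def, ← map_mul, mul_comm]
  have Trange : ∀ w : R₁ ⊗[k] R₂,
      (∑ p : G × H, pa'.α p (w * pa'.e p⁻¹)) ∈ Set.range (algebraMap k (R₁ ⊗[k] R₂)) := by
    intro w
    induction w using TensorProduct.induction_on with
    | zero =>
        refine ⟨0, ?_⟩
        simp [pa'.alpha_zero]
    | tmul a b =>
        rw [Tpure a b]
        obtain ⟨κ₁, h₁⟩ := pa₁.tr_mem hinv₁ a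
        obtain ⟨κ₂, h₂⟩ := pa₂.tr_mem hinv₂ b
        exact ⟨κ₁ * κ₂, by rw [← halg, h₁, h₂]⟩
    | add w₁ w₂ ih₁ ih₂ =>
        have hsplit : (∑ p : G × H, pa'.α p ((w₁ + w₂) * pa'.e p⁻¹))
            = (∑ p : G × H, pa'.α p (w₁ * pa'.e p⁻¹))
              + ∑ p : G × H, pa'.α p (w₂ * pa'.e p⁻¹) := by
          rw [← Finset.sum_add_distrib]
          exact Finset.sum_congr rfl fun p _ => by rw [add_mul, pa'.map_add]
        rw [hsplit]
        obtain ⟨κ₁, h₁⟩ := ih₁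
        obtain ⟨κ₂, h₂⟩ := ih₂
        exact ⟨κ₁ + κ₂, by rw [map_add, h₁, h₂]⟩
  constructor
  · intro t
    constructor
    · -- invariant ⇒ in the base ring
      intro hinvt
      obtain ⟨c₁, hc₁⟩ := pa₁.tr_surj hinv₁ x y hGal₁
      obtain ⟨c₂, hc₂⟩ := pa₂.tr_surj hinv₂ u z hGal₂
      have key : (∑ p : G × H, pa'.α p ((c₁ ⊗ₜ[k] c₂) * t * pa'.e p⁻¹)) = t := by
        have hterm : ∀ p : G × H,
            pa'.α p ((c₁ ⊗ₜ[k] c₂) * t * pa'.e p⁻¹)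
              = pa'.α p ((c₁ ⊗ₜ[k] c₂) * pa'.e p⁻¹) * t := by
          intro p
          rw [pa'.map_mul' p _ t, pa'.proj p t, hinvt p,
            show pa'.α p (c₁ ⊗ₜ[k] c₂) * (t * pa'.e p)
              = (pa'.α p (c₁ ⊗ₜ[k] c₂) * pa'.e p) * t by ring,
            pa'.mem, ← pa'.proj]
        rw [Finset.sum_congr rfl (fun p _ => hterm p), ← Finset.sum_mul,
          Tpure c₁ c₂, hc₁, hc₂, ← Algebra.TensorProduct.one_def, one_mul]
      exact key ▸ Trange ((c₁ ⊗ₜ[k] c₂) * t)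
    · -- base ring elements are invariant
      rintro ⟨κ, rfl⟩ p
      have ht : algebraMap k (R₁ ⊗[k] R₂) κ = (algebraMap k R₁ κ) ⊗ₜ[k] (1 : R₂) :=
        Algebra.TensorProduct.algebraMap_apply κ
      rw [ht, hepinv p, he p, Algebra.TensorProduct.tmul_mul_tmul,
        Algebra.TensorProduct.tmul_mul_tmul, hα]
      rw [(hinv₁ _).mpr ⟨κ, rfl⟩ p.1, one_mul, pa₂.map_e, one_mul]
  · -- the Galois coordinate system
    rintro ⟨g, h⟩
    have hterm : ∀ (i : Fin n₁) (j : Fin n₂),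
        (x i ⊗ₜ[k] u j) * pa'.α (g, h) ((y i ⊗ₜ[k] z j) * pa'.e (g, h)⁻¹)
          = (x i * pa₁.α g (y i * pa₁.e g⁻¹)) ⊗ₜ[k] (u j * pa₂.α h (z j * pa₂.e h⁻¹)) := by
      intro i j
      rw [hepinv (g, h), Algebra.TensorProduct.tmul_mul_tmul, hα,
        Algebra.TensorProduct.tmul_mul_tmul]
    calc ∑ i, ∑ j, (x i ⊗ₜ[k] u j) * pa'.α (g, h) ((y i ⊗ₜ[k] z j) * pa'.e (g, h)⁻¹)
        = ∑ i, ∑ j, (x i * pa₁.α g (y i * pa₁.e g⁻¹))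
            ⊗ₜ[k] (u j * pa₂.α h (z j * pa₂.e h⁻¹)) :=
          Finset.sum_congr rfl fun i _ => Finset.sum_congr rfl fun j _ => hterm i j
      _ = ∑ i, (x i * pa₁.α g (y i * pa₁.e g⁻¹))
            ⊗ₜ[k] (∑ j, u j * pa₂.α h (z j * pa₂.e h⁻¹)) :=
          Finset.sum_congr rfl fun i _ => (TensorProduct.tmul_sum _ _ _).symm
      _ = (∑ i, x i * pa₁.α g (y i * pa₁.e g⁻¹))
            ⊗ₜ[k] (∑ j, u j * pa₂.α h (z j * pa₂.e h⁻¹)) := (TensorProduct.sum_tmul _ _ _).symm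
      _ = (if g = 1 then 1 else 0) ⊗ₜ[k] (if h = 1 then (1:R₂) else 0) := by
          rw [hGal₁ g, hGal₂ h]
      _ = if (g, h) = 1 then 1 else 0 := by
          by_cases hg : g = 1 <;> by_cases hh : h = 1 <;>
            simp [hg, hh, Prod.ext_iff, Algebra.TensorProduct.one_def]
end
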